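/- Let Γ be a connected highly-regular graph. Then for every i ∈ {0, 1, …, diam(Γ)} and all vertices u, v, the induced subgraph of Γ on D_i(u) and the induced subgraph of Γ on D_i(v) have the same degree sequence, i.e., the multiset of vertex degrees of the induced subgraph on D_i(u) equals the multiset of vertex degrees of the induced subgraph on D_i(v). -/

import Mathlib

/-- A partition of the vertex set (encoded as a cell-assignment map `P : V → Fin m`)
witnessing that `C` is a collapsed adjacency matrix at the vertex `u`:
the cell of index `0` is exactly `{u}`, every cell is nonempty, and every vertex in
cell `j` has exactly `C i j` neighbours in cell `i`. -/
def IsWitnessingPartition {V : Type*} [Fintype V] (G : SimpleGraph V) {m : ℕ}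
    (C : Fin m → Fin m → ℕ) (u : V) (P : V → Fin m) : Prop :=
  (∀ v : V, (P v : ℕ) = 0 ↔ v = u) ∧
  (∀ t : Fin m, ∃ v : V, P v = t) ∧
  (∀ (i j : Fin m) (y : V), P y = j → {z : V | P z = i ∧ G.Adj y z}.ncard = C i j)

/-- `C` is a collapsed adjacency matrix (CAM) of size `m` for `G`: `2 ≤ m`, `m < n`
(with `m = n` allowed only when `n = 2`), and every vertex admits a witnessing partition. -/
def IsCAM {V : Type*} [Fintype V] (G : SimpleGraph V) {m : ℕ}
    (C : Fin m → Fin m → ℕ) : Prop :=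
  2 ≤ m ∧ (m < Fintype.card V ∨ (m = Fintype.card V ∧ Fintype.card V = 2)) ∧
  ∀ u : V, ∃ P : V → Fin m, IsWitnessingPartition G C u P

/-- A graph is highly-regular if it admits some CAM. -/
def IsHighlyRegular {V : Type*} [Fintype V] (G : SimpleGraph V) : Prop :=
  ∃ (m : ℕ) (C : Fin m → Fin m → ℕ), IsCAM G C

/-- The index of a highly-regular graph: the least size of a CAM. -/
noncomputable def hrIndex {V : Type*} [Fintype V] (G : SimpleGraph V) : ℕ :=
  sInf {m : ℕ | ∃ C : Fin m → Fin m → ℕ, IsCAM G C}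

/-- A connected graph is distance-regular if the numbers `|D_1(v) ∩ D_{i-1}(u)|`,
`|D_1(v) ∩ D_i(u)|`, `|D_1(v) ∩ D_{i+1}(u)|` depend only on `i = d(u,v)`. -/
def IsDistanceRegular {V : Type*} [Fintype V] (G : SimpleGraph V) : Prop :=
  G.Connected ∧ ∀ i : ℕ, 1 ≤ i → i ≤ G.diam →
    ∀ j : ℕ, j = i - 1 ∨ j = i ∨ j = i + 1 →
    ∀ u v x y : V, G.dist u v = i → G.dist x y = i →
      {w : V | G.Adj v w ∧ G.dist u w = j}.ncard =
      {w : V | G.Adj y w ∧ G.dist x w = j}.ncard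

section Aux

open Finset

attribute [local instance] Classical.propDecidable

variable {V : Type*} [Fintype V] {G : SimpleGraph V} {m : ℕ} {C : Fin m → Fin m → ℕ}
  {u v : V} {P Q : V → Fin m}

/-- The neighbour count of `hP.2.2` as a `Finset.card`. -/
lemma wp_count (hP : IsWitnessingPartition G C u P) (i : Fin m) (y : V) :
    (Finset.univ.filter fun z => P z = i ∧ G.Adj y z).card = C i (P y) := by
  have h := hP.2.2 i (P y) y rfl
  rw [← h, ← Set.ncard_coe_finset]
  congr 1
  ext z; simp

/-- Distance to the base point transfers between witnessing partitions: `≤` version. -/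
lemma dist_le_transfer (hconn : G.Connected) :
    ∀ n : ℕ, ∀ (u v : V) (P Q : V → Fin m),
      IsWitnessingPartition G C u P → IsWitnessingPartition G C v Q →
      ∀ y z : V, P y = Q z → G.dist u y ≤ n → G.dist v z ≤ n := by
  intro n
  induction n with
  | zero =>
    intro u v P Q hP hQ y z hyz h
    have hy : y = u := by
      have := Nat.le_zero.mp h
      exact ((hconn.dist_eq_zero_iff).mp this).symm
    have hPy : (P y : ℕ) = 0 := (hP.1 y).mpr hy
    have hQz : (Q z : ℕ) = 0 := by rw [← hyz]; exact hPy
    have hz : z = v := (hQ.1 z).mp hQz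
    subst hz
    simp [SimpleGraph.dist_self]
  | succ n ih =>
    intro u v P Q hP hQ y z hyz h
    rcases Nat.lt_or_ge (G.dist u y) (n + 1) with hlt | hge
    · exact le_trans (ih u v P Q hP hQ y z hyz (Nat.lt_succ_iff.mp hlt)) (Nat.le_succ n)
    have hd : G.dist u y = n + 1 := le_antisymm h hge
    -- extract a neighbour `w` of `y` with `dist u w ≤ n`
    obtain ⟨p, hp⟩ := hconn.exists_walk_length_eq_dist u y
    have hnn : ¬ p.reverse.Nil := by
      rw [SimpleGraph.Walk.nil_iff_length_eq, SimpleGraph.Walk.length_reverse, hp, hd]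
      simp
    obtain ⟨w, hadj, q, hq⟩ := SimpleGraph.Walk.not_nil_iff.mp hnn
    have hqlen : q.length = n := by
      have := congrArg SimpleGraph.Walk.length hq
      rw [SimpleGraph.Walk.length_reverse, hp, hd] at this
      simpa using this.symm
    have hw : G.dist u w ≤ n := by
      have := SimpleGraph.dist_le q.reverse
      rwa [SimpleGraph.Walk.length_reverse, hqlen] at this
    -- `C (P w) (P y) ≠ 0`
    have hCne : C (P w) (P y) ≠ 0 := by
      rw [← wp_count hP (P w) y]
      have hmem : w ∈ Finset.univ.filter fun z => P z = P w ∧ G.Adj y z := by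
        simp [hadj]
      exact Finset.card_ne_zero_of_mem hmem
    -- find the corresponding neighbour of `z`
    have hcnt : (Finset.univ.filter fun z' => Q z' = P w ∧ G.Adj z z').card
        = C (P w) (P y) := by
      rw [wp_count hQ (P w) z, ← hyz]
    have hne : (Finset.univ.filter fun z' => Q z' = P w ∧ G.Adj z z').Nonempty := by
      rw [← Finset.card_pos, hcnt]
      exact Nat.pos_of_ne_zero hCne
    obtain ⟨w', hw'⟩ := hne
    simp only [Finset.mem_filter, Finset.mem_univ, true_and] at hw'
    have hdw' : G.dist v w' ≤ n := ih u v P Q hP hQ w w' hw'.1.symm hw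
    calc G.dist v z ≤ G.dist v w' + G.dist w' z := hconn.dist_triangle
      _ ≤ n + 1 := by
          have h1 : G.dist w' z ≤ 1 := by
            have := SimpleGraph.dist_le (hw'.2.symm).toWalk
            simpa using this
          omega

/-- Distance to the base point transfers between witnessing partitions. -/
lemma dist_eq_transfer (hconn : G.Connected)
    (hP : IsWitnessingPartition G C u P) (hQ : IsWitnessingPartition G C v Q)
    {y z : V} (hyz : P y = Q z) : G.dist u y = G.dist v z := by
  have h1 := dist_le_transfer hconn (G.dist u y) u v P Q hP hQ y z hyz le_rfl
  have h2 := dist_le_transfer hconn (G.dist v z) v u Q P hQ hP z y hyz.symm le_rfl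
  omega

/-- Double counting of edges between two cells. -/
lemma edge_count (hP : IsWitnessingPartition G C u P) (i j : Fin m) :
    C i j * (Finset.univ.filter fun y => P y = j).card
      = C j i * (Finset.univ.filter fun y => P y = i).card := by
  have key : ∀ (i j : Fin m),
      C i j * (Finset.univ.filter fun y => P y = j).card
        = ∑ y : V, ∑ w : V, if P y = j ∧ P w = i ∧ G.Adj y w then 1 else 0 := by
    intro i j
    have h1 : C i j * (Finset.univ.filter fun y => P y = j).card
        = ∑ y ∈ Finset.univ.filter (fun y => P y = j),
            (Finset.univ.filter fun w => P w = i ∧ G.Adj y w).card := by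
      rw [Finset.sum_congr rfl (fun y hy => ?_), Finset.sum_const, smul_eq_mul, mul_comm]
      · simp only [Finset.mem_filter, Finset.mem_univ, true_and] at hy
        rw [wp_count hP i y, hy]
    rw [h1, Finset.sum_filter]
    apply Finset.sum_congr rfl
    intro y _
    by_cases hy : P y = j
    · simp only [hy, true_and, if_true]
      rw [Finset.card_filter]
    · simp [hy]
  rw [key i j, key j i, Finset.sum_comm]
  apply Finset.sum_congr rfl; intro y _
  apply Finset.sum_congr rfl; intro w _
  congr 1
  simp only [eq_iff_iff]
  constructor
  · rintro ⟨h1, h2, h3⟩; exact ⟨h2, h1, h3.symm⟩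
  · rintro ⟨h1, h2, h3⟩; exact ⟨h2, h1, h3.symm⟩

/-- Cells of the same index have the same size in any two witnessing partitions. -/
lemma cell_card (hconn : G.Connected)
    (hP : IsWitnessingPartition G C u P) (hQ : IsWitnessingPartition G C v Q) (j : Fin m) :
    (Finset.univ.filter fun y => P y = j).card
      = (Finset.univ.filter fun z => Q z = j).card := by
  obtain ⟨y, hy⟩ := hP.2.1 j
  have main : ∀ n : ℕ, ∀ (j : Fin m) (y : V), P y = j → G.dist u y = n →
      (Finset.univ.filter fun x => P x = j).card
        = (Finset.univ.filter fun z => Q z = j).card := by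
    intro n
    induction n with
    | zero =>
      intro j y hyj hdy
      have hy : y = u := ((hconn.dist_eq_zero_iff).mp hdy).symm
      have hj : (j : ℕ) = 0 := by rw [← hyj]; exact (hP.1 y).mpr hy
      have e1 : (Finset.univ.filter fun x => P x = j) = {u} := by
        ext x
        simp only [Finset.mem_filter, Finset.mem_univ, true_and, Finset.mem_singleton]
        rw [Fin.ext_iff, hj]
        exact hP.1 x
      have e2 : (Finset.univ.filter fun z => Q z = j) = {v} := by
        ext x
        simp only [Finset.mem_filter, Finset.mem_univ, true_and, Finset.mem_singleton]
        rw [Fin.ext_iff, hj]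
        exact hQ.1 x
      rw [e1, e2]; simp
    | succ n ih =>
      intro j y hyj hdy
      obtain ⟨p, hp⟩ := hconn.exists_walk_length_eq_dist u y
      have hnn : ¬ p.reverse.Nil := by
        rw [SimpleGraph.Walk.nil_iff_length_eq, SimpleGraph.Walk.length_reverse, hp, hdy]
        simp
      obtain ⟨w, hadj, q, hq⟩ := SimpleGraph.Walk.not_nil_iff.mp hnn
      have hqlen : q.length = n := by
        have := congrArg SimpleGraph.Walk.length hq
        rw [SimpleGraph.Walk.length_reverse, hp, hdy] at this
        simpa using this.symm
      have hwle : G.dist u w ≤ n := by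
        have := SimpleGraph.dist_le q.reverse
        rwa [SimpleGraph.Walk.length_reverse, hqlen] at this
      have hwge : n ≤ G.dist u w := by
        have htri : G.dist u y ≤ G.dist u w + G.dist w y := hconn.dist_triangle
        have h1 : G.dist w y ≤ 1 := by
          have := SimpleGraph.dist_le (hadj.symm).toWalk
          simpa using this
        omega
      have hwd : G.dist u w = n := le_antisymm hwle hwge
      have ihw := ih (P w) w rfl hwd
      have hCne : C (P w) j ≠ 0 := by
        rw [← hyj, ← wp_count hP (P w) y]
        have hmem : w ∈ Finset.univ.filter fun z => P z = P w ∧ G.Adj y z := by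
          simp [hadj]
        exact Finset.card_ne_zero_of_mem hmem
      have e1 := edge_count hP (P w) j
      have e2 := edge_count hQ (P w) j
      rw [ihw] at e1
      have : C (P w) j * (Finset.univ.filter fun x => P x = j).card
          = C (P w) j * (Finset.univ.filter fun z => Q z = j).card := by
        rw [e1, e2]
      exact Nat.eq_of_mul_eq_mul_left (Nat.pos_of_ne_zero hCne) this
  exact main (G.dist u y) j y hy rfl

end Aux

/-- For a connected highly-regular graph, the induced subgraphs on
`D_i(u)` and `D_i(v)` have the same degree sequence: for each `d`, the number of
vertices of `D_i(u)` having exactly `d` neighbours inside `D_i(u)` equals the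
corresponding number for `v`. -/
theorem stmt12 {V : Type*} [Fintype V] (G : SimpleGraph V)
    (hconn : G.Connected) (hhr : IsHighlyRegular G) :
    ∀ i : ℕ, i ≤ G.diam → ∀ u v : V, ∀ d : ℕ,
      {w : V | G.dist u w = i ∧ {z : V | G.dist u z = i ∧ G.Adj w z}.ncard = d}.ncard =
      {w : V | G.dist v w = i ∧ {z : V | G.dist v z = i ∧ G.Adj w z}.ncard = d}.ncard := by
  classical
  intro i _ u v d
  obtain ⟨m, C, hC⟩ := hhr
  obtain ⟨P, hP⟩ := hC.2.2 u
  obtain ⟨Q, hQ⟩ := hC.2.2 v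
  -- the set of cell indices at distance `i` (the same for both base points)
  set K : Finset (Fin m) :=
    Finset.univ.filter (fun k => ∃ x, P x = k ∧ G.dist u x = i) with hK
  -- distance to `u` is read off the `P`-cell
  have memKP : ∀ w : V, G.dist u w = i ↔ P w ∈ K := by
    intro w
    constructor
    · intro hw; simp only [hK, Finset.mem_filter, Finset.mem_univ, true_and]
      exact ⟨w, rfl, hw⟩
    · intro hw
      simp only [hK, Finset.mem_filter, Finset.mem_univ, true_and] at hw
      obtain ⟨x, hx, hxd⟩ := hw
      rw [dist_eq_transfer hconn hP hP (z := x) hx.symm]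
      exact hxd
  -- distance to `v` is read off the `Q`-cell, with the same index set `K`
  have memKQ : ∀ w : V, G.dist v w = i ↔ Q w ∈ K := by
    intro w
    constructor
    · intro hw
      obtain ⟨x, hx⟩ := hP.2.1 (Q w)
      simp only [hK, Finset.mem_filter, Finset.mem_univ, true_and]
      refine ⟨x, hx, ?_⟩
      rw [dist_eq_transfer hconn hP hQ hx]
      exact hw
    · intro hw
      simp only [hK, Finset.mem_filter, Finset.mem_univ, true_and] at hw
      obtain ⟨x, hx, hxd⟩ := hw
      rw [← dist_eq_transfer hconn hP hQ hx]
      exact hxd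
  -- inner degrees as cell-wise sums
  have innerP : ∀ y : V, {z : V | G.dist u z = i ∧ G.Adj y z}.ncard
      = ∑ k ∈ K, C k (P y) := by
    intro y
    have hset : {z : V | G.dist u z = i ∧ G.Adj y z}
        = ↑(Finset.univ.filter fun z => G.dist u z = i ∧ G.Adj y z) := by
      ext z; simp
    rw [hset, Set.ncard_coe_finset]
    rw [Finset.card_eq_sum_card_fiberwise (f := P) (t := K) (fun x hx => by
      simp only [Finset.coe_filter, Set.mem_setOf_eq, Finset.mem_filter, Finset.mem_univ, true_and] at hx
      exact (memKP x).mp hx.1)]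
    apply Finset.sum_congr rfl
    intro k hk
    rw [← wp_count hP k y]
    congr 1
    ext z
    simp only [Finset.mem_filter, Finset.mem_univ, true_and]
    constructor
    · rintro ⟨⟨_, h2⟩, h3⟩; exact ⟨h3, h2⟩
    · rintro ⟨h1, h2⟩
      exact ⟨⟨(memKP z).mpr (h1 ▸ hk), h2⟩, h1⟩
  have innerQ : ∀ y : V, {z : V | G.dist v z = i ∧ G.Adj y z}.ncard
      = ∑ k ∈ K, C k (Q y) := by
    intro y
    have hset : {z : V | G.dist v z = i ∧ G.Adj y z}
        = ↑(Finset.univ.filter fun z => G.dist v z = i ∧ G.Adj y z) := by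
      ext z; simp
    rw [hset, Set.ncard_coe_finset]
    rw [Finset.card_eq_sum_card_fiberwise (f := Q) (t := K) (fun x hx => by
      simp only [Finset.coe_filter, Set.mem_setOf_eq, Finset.mem_filter, Finset.mem_univ, true_and] at hx
      exact (memKQ x).mp hx.1)]
    apply Finset.sum_congr rfl
    intro k hk
    rw [← wp_count hQ k y]
    congr 1
    ext z
    simp only [Finset.mem_filter, Finset.mem_univ, true_and]
    constructor
    · rintro ⟨⟨_, h2⟩, h3⟩; exact ⟨h3, h2⟩
    · rintro ⟨h1, h2⟩
      exact ⟨⟨(memKQ z).mpr (h1 ▸ hk), h2⟩, h1⟩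
  -- the set of "good" cells
  set T : Finset (Fin m) := K.filter (fun j => ∑ k ∈ K, C k j = d) with hT
  have lhs_eq : {w : V | G.dist u w = i ∧ {z : V | G.dist u z = i ∧ G.Adj w z}.ncard = d}
      = ↑(Finset.univ.filter fun w => P w ∈ T) := by
    ext w
    simp only [Set.mem_setOf_eq, Finset.coe_filter, Finset.mem_univ, true_and,
      Set.mem_setOf_eq, hT, Finset.mem_filter]
    rw [memKP w, innerP w]
  have rhs_eq : {w : V | G.dist v w = i ∧ {z : V | G.dist v z = i ∧ G.Adj w z}.ncard = d}
      = ↑(Finset.univ.filter fun w => Q w ∈ T) := by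
    ext w
    simp only [Set.mem_setOf_eq, Finset.coe_filter, Finset.mem_univ, true_and,
      Set.mem_setOf_eq, hT, Finset.mem_filter]
    rw [memKQ w, innerQ w]
  rw [lhs_eq, rhs_eq, Set.ncard_coe_finset, Set.ncard_coe_finset]
  rw [Finset.card_eq_sum_card_fiberwise (f := P) (t := T) (fun x hx => by
        simpa using hx),
    Finset.card_eq_sum_card_fiberwise (f := Q) (t := T) (fun x hx => by
        simpa using hx)]
  apply Finset.sum_congr rfl
  intro j hj
  have e1 : Finset.filter (fun a => P a = j) (Finset.filter (fun w => P w ∈ T) Finset.univ)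
      = Finset.filter (fun a => P a = j) Finset.univ := by
    ext a
    simp only [Finset.mem_filter, Finset.mem_univ, true_and]
    exact ⟨fun h => h.2, fun h => ⟨h ▸ hj, h⟩⟩
  have e2 : Finset.filter (fun a => Q a = j) (Finset.filter (fun w => Q w ∈ T) Finset.univ)
      = Finset.filter (fun a => Q a = j) Finset.univ := by
    ext a
    simp only [Finset.mem_filter, Finset.mem_univ, true_and]
    exact ⟨fun h => h.2, fun h => ⟨h ▸ hj, h⟩⟩
  rw [e1, e2]
  exact cell_card hconn hP hQ j
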